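/- Let K be a number field of degree n over ℚ, let p be a rational prime, and let 𝔭 be a prime ideal of O_K lying above p with ramification index e(𝔭|p) = n (so p is totally ramified in K/ℚ and 𝔭 has residue degree 1). Then for every unit ε ∈ O_K^×, one has ε^n ≡ 1 (mod 𝔭) or ε^n ≡ −1 (mod 𝔭). -/

import Mathlib

open NumberField


open NumberField

set_option maxHeartbeats 1000000
set_option synthInstance.maxHeartbeats 400000

lemma aux_nat (p n A t : ℕ) (hp : p.Prime) (hn1 : 1 ≤ n) (hA : A ≠ 1)
    (h : p ^ n = A ^ n * t) : A = p ∧ t = 1 := by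
  have hAd : A ∣ p ^ n := ⟨A ^ (n-1) * t, by rw [h]; ring_nf; rw [← pow_succ', Nat.sub_add_cancel hn1]⟩
  obtain ⟨k, hk, hAk⟩ := (Nat.dvd_prime_pow hp).mp hAd
  have hk0 : k ≠ 0 := by rintro rfl; simp at hAk; exact hA hAk
  have hpA : p ≤ A := hAk ▸ Nat.le_self_pow hk0 p
  have hle : A ^ n ≤ p ^ n := Nat.le_of_dvd (pow_pos hp.pos n) ⟨t, h⟩
  have heq : A ^ n = p ^ n := le_antisymm hle (Nat.pow_le_pow_left hpA n)
  have hApeq : A = p := Nat.pow_left_injective (by omega) heq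
  refine ⟨hApeq, ?_⟩
  rw [heq] at h
  have hpn : 0 < p ^ n := pow_pos hp.pos n
  nlinarith

lemma aux_main (K : Type*) [Field K] [NumberField K]
    (n : ℕ) (hn : n = Module.finrank ℚ K)
    (p : ℕ) (hp : p.Prime)
    (P : Ideal (𝓞 K)) (hP : P.IsPrime) (hPp : (p : 𝓞 K) ∈ P)
    (he : Ideal.ramificationIdx' (Ideal.span {(p : ℤ)}) P = n) :
    Ideal.span {(p : 𝓞 K)} = P ^ n ∧ Ideal.absNorm P = p := by
  have hn1 : 1 ≤ n := by rw [hn]; exact Module.finrank_pos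
  have hmap : Ideal.map (algebraMap ℤ (𝓞 K)) (Ideal.span {(p : ℤ)}) = Ideal.span {(p : 𝓞 K)} := by
    rw [Ideal.map_span, Set.image_singleton, map_natCast]
  have hle : Ideal.span {(p : 𝓞 K)} ≤ P ^ n := by
    rw [← hmap, ← he]; exact Ideal.le_pow_ramificationIdx'
  obtain ⟨J, hJ⟩ := Ideal.dvd_iff_le.mpr hle
  have hnormp : Ideal.absNorm (Ideal.span {(p : 𝓞 K)}) = p ^ n := by
    rw [Ideal.absNorm_span_singleton]
    have : (p : 𝓞 K) = algebraMap ℤ (𝓞 K) (p : ℤ) := by simp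
    rw [this, Algebra.norm_algebraMap_of_basis (Module.Free.chooseBasis ℤ (𝓞 K)),
      ← Module.finrank_eq_card_chooseBasisIndex, RingOfIntegers.rank, ← hn]
    simp [Int.natAbs_pow]
  have hnmul : p ^ n = (Ideal.absNorm P) ^ n * Ideal.absNorm J := by
    rw [← hnormp, hJ, _root_.map_mul Ideal.absNorm, _root_.map_pow Ideal.absNorm]
  have hA1 : Ideal.absNorm P ≠ 1 := by
    rw [Ne, Ideal.absNorm_eq_one_iff]; exact hP.ne_top
  obtain ⟨hAp, hJ1⟩ := aux_nat p n _ _ hp hn1 hA1 hnmul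
  have hJtop : J = ⊤ := Ideal.absNorm_eq_one_iff.mp hJ1
  rw [hJtop, Ideal.mul_top] at hJ
  exact ⟨hJ, hAp⟩

lemma aux_res (K : Type*) [Field K] [NumberField K]
    (p : ℕ) (hp : p.Prime)
    (P : Ideal (𝓞 K)) (hP : P.IsPrime) (hPp : (p : 𝓞 K) ∈ P)
    (hcard : Ideal.absNorm P = p) (x : 𝓞 K) :
    ∃ a : ℤ, x - (a : 𝓞 K) ∈ P := by
  have hPtop : P ≠ ⊤ := hP.ne_top
  haveI : Nontrivial ((𝓞 K) ⧸ P) := Ideal.Quotient.nontrivial_iff.mpr hPtop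
  have hfin : Nat.card ((𝓞 K) ⧸ P) = p := by
    rw [← hcard, Ideal.absNorm_apply, Submodule.cardQuot_apply]
  haveI : Finite ((𝓞 K) ⧸ P) := by
    refine (Nat.card_pos_iff.mp ?_).2
    rw [hfin]; exact hp.pos
  set f : ℤ →+* (𝓞 K) ⧸ P := (Ideal.Quotient.mk P).comp (Int.castRingHom (𝓞 K)) with hf
  have hmax : (Ideal.span {(p : ℤ)}).IsMaximal :=
    PrincipalIdealRing.isMaximal_of_irreducible (Nat.prime_iff_prime_int.mp hp).irreducible
  have hker : Ideal.span {(p : ℤ)} = RingHom.ker f := by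
    refine hmax.eq_of_le ?_ ?_
    · rw [Ideal.ne_top_iff_one]
      intro h1
      have : f 1 = 0 := h1
      rw [map_one] at this
      exact one_ne_zero this
    · rw [Ideal.span_le, Set.singleton_subset_iff]
      show Ideal.Quotient.mk P (((p : ℤ) : 𝓞 K)) = 0
      rw [Ideal.Quotient.eq_zero_iff_mem]
      exact_mod_cast hPp
  have hinj : Function.Injective (RingHom.kerLift f) := RingHom.kerLift_injective f
  have hcard2 : Nat.card (ℤ ⧸ RingHom.ker f) = Nat.card ((𝓞 K) ⧸ P) := by
    rw [← hker, Nat.card_congr (Int.quotientSpanNatEquivZMod p).toEquiv, Nat.card_zmod, hfin]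
  haveI : NeZero p := ⟨hp.pos.ne'⟩
  haveI : Finite (ℤ ⧸ RingHom.ker f) := by
    rw [← hker]
    exact Finite.of_equiv _ (Int.quotientSpanNatEquivZMod p).toEquiv.symm
  have hbij : Function.Bijective (RingHom.kerLift f) :=
    (Nat.bijective_iff_injective_and_card _).mpr ⟨hinj, hcard2⟩
  have hsurj : Function.Surjective f := by
    intro y
    obtain ⟨z, hz⟩ := hbij.2 y
    obtain ⟨a, rfl⟩ := Ideal.Quotient.mk_surjective z
    exact ⟨a, by rwa [← RingHom.kerLift_mk f a]⟩
  obtain ⟨a, ha⟩ := hsurj (Ideal.Quotient.mk P x)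
  refine ⟨a, ?_⟩
  rw [← Ideal.Quotient.eq]
  simpa [hf] using ha.symm

noncomputable abbrev Ebar : Type := AlgebraicClosure ℚ
noncomputable abbrev Obar : Type := integralClosure ℤ Ebar

noncomputable def emb (K : Type*) [Field K] [NumberField K] (σ : K →ₐ[ℚ] Ebar) :
    (𝓞 K) →+* Obar where
  toFun y := ⟨σ (y : K),
    (mem_integralClosure_iff ℤ _).mpr ((RingOfIntegers.isIntegral_coe y).map (σ.restrictScalars ℤ))⟩
  map_one' := by ext : 1; simp
  map_mul' a b := by ext : 1; simp
  map_zero' := by ext : 1; simp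
  map_add' a b := by ext : 1; simp

@[simp] lemma emb_coe (K : Type*) [Field K] [NumberField K] (σ : K →ₐ[ℚ] Ebar) (y : 𝓞 K) :
    (emb K σ y : Ebar) = σ (y : K) := rfl

-- p is not a unit in Obar
lemma p_not_top (p : ℕ) (hp : p.Prime) : Ideal.span {(p : Obar)} ≠ ⊤ := by
  rw [Ne, Ideal.span_singleton_eq_top]
  rintro ⟨v, hv⟩
  have h1 : ((v⁻¹ : Obarˣ) : Obar) * (p : Obar) = 1 := by
    rw [← hv]; exact v.inv_mul
  have h2 : (((v⁻¹ : Obarˣ) : Obar) : Ebar) * (p : Ebar) = 1 := by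
    have := congrArg (fun z : Obar => (z : Ebar)) h1
    push_cast at this
    exact_mod_cast this
  have hint : IsIntegral ℤ (((v⁻¹ : Obarˣ) : Obar) : Ebar) :=
    (mem_integralClosure_iff ℤ _).mp (v⁻¹ : Obarˣ).1.2
  have hpne : (p : Ebar) ≠ 0 := Nat.cast_ne_zero.mpr hp.ne_zero
  have heq : (((v⁻¹ : Obarˣ) : Obar) : Ebar) = algebraMap ℚ Ebar ((p : ℚ)⁻¹) := by
    have : (((v⁻¹ : Obarˣ) : Obar) : Ebar) = (p : Ebar)⁻¹ := eq_inv_of_mul_eq_one_left h2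
    rw [this]
    rw [eq_comm, map_inv₀]
    norm_num
  rw [heq] at hint
  have hint2 : IsIntegral ℤ ((p : ℚ)⁻¹) := by
    exact (isIntegral_algHom_iff (IsScalarTower.toAlgHom ℤ ℚ Ebar)
      (algebraMap ℚ Ebar).injective).mp hint
  obtain ⟨z, hz⟩ := IsIntegrallyClosed.isIntegral_iff.mp hint2
  have hzq : ((p * z : ℤ) : ℚ) = 1 := by
    push_cast
    rw [show ((z:ℚ)) = (p:ℚ)⁻¹ from hz ▸ rfl]
    rw [mul_inv_cancel₀ (by exact_mod_cast hp.ne_zero : (p:ℚ) ≠ 0)]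
  have : (p * z : ℤ) = 1 := by exact_mod_cast hzq
  have h3 := Int.eq_one_of_mul_eq_one_right (by positivity) this
  have h4 := hp.one_lt
  omega

lemma aux_key (K : Type*) [Field K] [NumberField K]
    (n : ℕ) (hn : n = Module.finrank ℚ K)
    (p : ℕ) (hp : p.Prime)
    (P : Ideal (𝓞 K)) (hP : P.IsPrime) (hPp : (p : 𝓞 K) ∈ P)
    (hspan : Ideal.span {(p : 𝓞 K)} = P ^ n)
    (x : 𝓞 K) (a : ℤ) (ha : x - (a : 𝓞 K) ∈ P) :
    (p : ℤ) ∣ Algebra.norm ℤ x - a ^ n := by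
  have hn1 : 1 ≤ n := by rw [hn]; exact Module.finrank_pos
  -- uniqueness of the prime above p
  have hP0 : P ≠ ⊥ := by
    intro h
    rw [h, Ideal.mem_bot] at hPp
    exact (Nat.cast_ne_zero (R := 𝓞 K)).mpr hp.ne_zero hPp
  have hPmax : P.IsMaximal := Ideal.IsPrime.isMaximal hP hP0
  have huniq : ∀ Q : Ideal (𝓞 K), Q.IsPrime → (p : 𝓞 K) ∈ Q → Q = P := by
    intro Q hQ hpQ
    have h1 : P ^ n ≤ Q := by
      rw [← hspan]
      exact (Ideal.span_singleton_le_iff_mem Q).mpr hpQ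
    exact (hPmax.eq_of_le hQ.ne_top (hQ.le_of_pow_le h1)).symm
  -- a maximal ideal of Obar containing p
  obtain ⟨𝔔, h𝔔max, h𝔔⟩ := Ideal.exists_le_maximal _ (p_not_top p hp)
  have hp𝔔 : (p : Obar) ∈ 𝔔 := h𝔔 (Ideal.subset_span rfl)
  haveI := h𝔔max.isPrime
  -- each embedding sends x - a into 𝔔
  have hσ : ∀ σ : K →ₐ[ℚ] Ebar, emb K σ x - (a : Obar) ∈ 𝔔 := by
    intro σ
    have hcomap : Ideal.comap (emb K σ) 𝔔 = P := by
      refine huniq _ (Ideal.IsPrime.comap _) ?_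
      show emb K σ (p : 𝓞 K) ∈ 𝔔
      have : emb K σ (p : 𝓞 K) = (p : Obar) := by
        ext : 1
        simp
      rwa [this]
    have := hcomap ▸ ha
    have h2 : emb K σ (x - (a : 𝓞 K)) ∈ 𝔔 := this
    rwa [map_sub, map_intCast] at h2
  -- the norm as a product over embeddings
  have hprod : ((Algebra.norm ℤ x : ℤ) : Obar) = ∏ σ : K →ₐ[ℚ] Ebar, emb K σ x := by
    apply Subtype.coe_injective
    show (((Algebra.norm ℤ x : ℤ) : Obar) : Ebar)
      = ((∏ σ : K →ₐ[ℚ] Ebar, emb K σ x : Obar) : Ebar)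
    rw [SubmonoidClass.coe_finset_prod]
    simp only [emb_coe]
    rw [← Algebra.norm_eq_prod_embeddings ℚ Ebar ((x : K))]
    rw [← Algebra.coe_norm_int x]
    push_cast
    rfl
  -- pass to the quotient
  have hcard : Fintype.card (K →ₐ[ℚ] Ebar) = n := by
    rw [AlgHom.card, hn]
  have hmem : ((Algebra.norm ℤ x - a ^ n : ℤ) : Obar) ∈ 𝔔 := by
    have hπ : Ideal.Quotient.mk 𝔔 ((Algebra.norm ℤ x : ℤ) : Obar)
        = Ideal.Quotient.mk 𝔔 (((a : Obar)) ^ n) := by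
      rw [hprod, map_prod]
      have : ∀ σ : K →ₐ[ℚ] Ebar,
          Ideal.Quotient.mk 𝔔 (emb K σ x) = Ideal.Quotient.mk 𝔔 ((a : Obar)) := by
        intro σ
        rw [Ideal.Quotient.mk_eq_mk_iff_sub_mem]
        exact hσ σ
      rw [Finset.prod_congr rfl (fun σ _ => this σ), Finset.prod_const, Finset.card_univ,
        hcard, map_pow]
    have := (Ideal.Quotient.mk_eq_mk_iff_sub_mem _ _).mp hπ
    push_cast
    push_cast at this
    exact this
  -- pull back to ℤ
  have hcomapZ : Ideal.comap (algebraMap ℤ Obar) 𝔔 = Ideal.span {(p : ℤ)} := by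
    have hmax : (Ideal.span {(p : ℤ)}).IsMaximal :=
      PrincipalIdealRing.isMaximal_of_irreducible (Nat.prime_iff_prime_int.mp hp).irreducible
    refine (hmax.eq_of_le (Ideal.IsPrime.comap _).ne_top ?_).symm
    rw [Ideal.span_le, Set.singleton_subset_iff]
    show algebraMap ℤ Obar (p : ℤ) ∈ 𝔔
    rw [eq_intCast]
    simpa using hp𝔔
  have : Algebra.norm ℤ x - a ^ n ∈ Ideal.comap (algebraMap ℤ Obar) 𝔔 := by
    show algebraMap ℤ Obar _ ∈ 𝔔
    rw [eq_intCast]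
    simpa using hmem
  rw [hcomapZ, Ideal.mem_span_singleton] at this
  exact this

/-- If the rational prime `p` is totally ramified in the number field `K` of
degree `n`, say `p O_K = 𝔭ⁿ`, then every unit `ε ∈ O_K^×` satisfies
`εⁿ ≡ ±1 (mod 𝔭)`. -/
theorem stmt_11 (K : Type*) [Field K] [NumberField K]
    (n : ℕ) (hn : n = Module.finrank ℚ K)
    (p : ℕ) (hp : p.Prime)
    (P : Ideal (𝓞 K)) (hP : P.IsPrime) (hPp : (p : 𝓞 K) ∈ P)
    (he : Ideal.ramificationIdx' (Ideal.span {(p : ℤ)}) P = n) :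
    ∀ ε : (𝓞 K)ˣ, (ε : 𝓞 K) ^ n - 1 ∈ P ∨ (ε : 𝓞 K) ^ n + 1 ∈ P := by
  obtain ⟨hspan, hcard⟩ := aux_main K n hn p hp P hP hPp he
  intro ε
  set x : 𝓞 K := (ε : 𝓞 K) with hx
  obtain ⟨a, ha⟩ := aux_res K p hp P hP hPp hcard x
  have hkey := aux_key K n hn p hp P hP hPp hspan x a ha
  -- the norm of a unit is ±1
  have hxunit : IsUnit x := ε.isUnit
  have hnorm : Algebra.norm ℤ x = 1 ∨ Algebra.norm ℤ x = -1 := by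
    have h1 : |Algebra.norm ℚ (x : K)| = 1 := NumberField.isUnit_iff_norm.mp hxunit
    have h2 : ((Algebra.norm ℤ x : ℤ) : ℚ) = Algebra.norm ℚ (x : K) := Algebra.coe_norm_int x
    have h3 : |Algebra.norm ℤ x| = 1 := by
      have : ((|Algebra.norm ℤ x| : ℤ) : ℚ) = 1 := by push_cast [← h2] at h1 ⊢; exact h1
      exact_mod_cast this
    rcases abs_eq (by norm_num : (0:ℤ) ≤ 1) |>.mp h3 with h | h
    · exact Or.inl h
    · exact Or.inr h
  -- x^n ≡ a^n mod P
  have h1 : x ^ n - (a : 𝓞 K) ^ n ∈ P := by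
    obtain ⟨c, hc⟩ := sub_dvd_pow_sub_pow x ((a : 𝓞 K)) n
    rw [hc]
    exact Ideal.mul_mem_right _ _ ha
  -- a^n ≡ norm mod P
  have h2 : (a : 𝓞 K) ^ n - ((Algebra.norm ℤ x : ℤ) : 𝓞 K) ∈ P := by
    obtain ⟨t, ht⟩ := hkey
    have : (a : 𝓞 K) ^ n - ((Algebra.norm ℤ x : ℤ) : 𝓞 K) = -((p : 𝓞 K) * (t : 𝓞 K)) := by
      have : (a ^ n - Algebra.norm ℤ x : ℤ) = -((p : ℤ) * t) := by omega
      calc (a : 𝓞 K) ^ n - ((Algebra.norm ℤ x : ℤ) : 𝓞 K)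
          = ((a ^ n - Algebra.norm ℤ x : ℤ) : 𝓞 K) := by push_cast; ring
        _ = ((-((p : ℤ) * t) : ℤ) : 𝓞 K) := by rw [this]
        _ = -((p : 𝓞 K) * (t : 𝓞 K)) := by push_cast; ring
    rw [this]
    exact neg_mem (Ideal.mul_mem_right _ _ hPp)
  have h3 : x ^ n - ((Algebra.norm ℤ x : ℤ) : 𝓞 K) ∈ P := by
    have := P.add_mem h1 h2
    simpa using this
  rcases hnorm with h | h
  · left; rw [h] at h3; simpa using h3
  · right; rw [h] at h3; simpa using h3
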